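/- Let S ≥ 1, let p ∈ ℝ^S be a probability vector with p_s > 0 for all s, let M > 0, and let f : ℝ → ℝ be convex and twice differentiable with f(1) = 0 and f''(t) ≥ c for some c > 0 and all t ∈ [0, M]. Let δ > 0 and 0 < ε ≤ δ/(5√S·|f'(1)|). For u ∈ ℝ^S define Φ(u) = { w ∈ ℝ^S : ∑_s (p_s + u_s) f(w_s) ≤ δ, ∑_s (p_s + u_s) w_s = 1, w_s ≥ 0 for all s }, and assume Φ(u) ⊆ [0, M]^S and Φ(u) is nonempty for all ‖u‖₂ ≤ ε with p + u entrywise nonnegative. Then there exists a constant C > 0 such that for all such u, the Hausdorff distance satisfies d_H(Φ(u), Φ(0)) ≤ C·‖u‖₂, i.e., d_H(Φ(u), Φ(0)) = O(‖u‖₂). -/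

import Mathlib

/-- The perturbed feasible set of adversarial weights over `S` latent categories:
`Φ(u) = { w : ∑ₛ (pₛ+uₛ) f(wₛ) ≤ δ, ∑ₛ (pₛ+uₛ) wₛ = 1, wₛ ≥ 0 }`, as a subset of
Euclidean space so that distances are measured in the `ℓ²` norm. -/
def Phi (S : ℕ) (p : EuclideanSpace ℝ (Fin S)) (f : ℝ → ℝ) (δ : ℝ)
    (u : EuclideanSpace ℝ (Fin S)) : Set (EuclideanSpace ℝ (Fin S)) :=
  {w | (∑ s, (p s + u s) * f (w s) ≤ δ) ∧ (∑ s, (p s + u s) * w s = 1) ∧ ∀ s, 0 ≤ w s}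

lemma helper_sum_abs_le {S : ℕ} (d : EuclideanSpace ℝ (Fin S)) :
    ∑ s, |d s| ≤ Real.sqrt S * ‖d‖ := by
  have hnn : (0:ℝ) ≤ ∑ s, |d s| := Finset.sum_nonneg fun s _ => abs_nonneg _
  have hsq : (∑ s, |d s|)^2 ≤ (S : ℝ) * ‖d‖^2 := by
    have := Finset.sum_mul_sq_le_sq_mul_sq Finset.univ (fun _ : Fin S => (1:ℝ)) (fun s => |d s|)
    have hnorm : ‖d‖^2 = ∑ s, |d s|^2 := by
      rw [EuclideanSpace.norm_eq, Real.sq_sqrt (Finset.sum_nonneg fun s _ => sq_nonneg _)]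
      simp [Real.norm_eq_abs, sq_abs]
    simpa [hnorm] using this
  rw [(Real.sqrt_sq hnn).symm]
  calc Real.sqrt ((∑ s, |d s|)^2) ≤ Real.sqrt ((S:ℝ) * ‖d‖^2) := Real.sqrt_le_sqrt hsq
    _ = Real.sqrt S * ‖d‖ := by
        rw [Real.sqrt_mul (Nat.cast_nonneg S), Real.sqrt_sq (norm_nonneg d)]

lemma helper_abs_sum_mul_le {S : ℕ} (d : EuclideanSpace ℝ (Fin S)) (y : Fin S → ℝ) {m : ℝ}
    (hm : 0 ≤ m) (h : ∀ s, |y s| ≤ m) : |∑ s, d s * y s| ≤ Real.sqrt S * ‖d‖ * m := by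
  calc |∑ s, d s * y s| ≤ ∑ s, |d s * y s| := Finset.abs_sum_le_sum_abs _ _
    _ ≤ ∑ s, |d s| * m := by
        refine Finset.sum_le_sum fun s _ => ?_
        rw [abs_mul]
        exact mul_le_mul_of_nonneg_left (h s) (abs_nonneg _)
    _ = (∑ s, |d s|) * m := (Finset.sum_mul _ _ _).symm
    _ ≤ Real.sqrt S * ‖d‖ * m := mul_le_mul_of_nonneg_right (helper_sum_abs_le d) hm

lemma helper_norm_le {S : ℕ} (x : EuclideanSpace ℝ (Fin S)) {m : ℝ} (hm : 0 ≤ m)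
    (h : ∀ s, |x s| ≤ m) : ‖x‖ ≤ Real.sqrt S * m := by
  rw [EuclideanSpace.norm_eq]
  have hb : ∑ s, ‖x s‖^2 ≤ (S:ℝ) * m^2 := by
    calc ∑ s, ‖x s‖^2 ≤ ∑ _s : Fin S, m^2 := by
          refine Finset.sum_le_sum fun s _ => ?_
          rw [Real.norm_eq_abs]
          exact pow_le_pow_left₀ (abs_nonneg _) (h s) 2
      _ = (S:ℝ) * m^2 := by simp [Finset.sum_const, mul_comm]
  calc Real.sqrt (∑ s, ‖x s‖^2) ≤ Real.sqrt ((S:ℝ) * m^2) := Real.sqrt_le_sqrt hb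
    _ = Real.sqrt S * m := by rw [Real.sqrt_mul (Nat.cast_nonneg S), Real.sqrt_sq hm]

lemma helper_core {S : ℕ} (q : Fin S → ℝ) (hq : ∀ s, 0 ≤ q s)
    {f : ℝ → ℝ} (hconv : ConvexOn ℝ Set.univ f)
    {δ η : ℝ} (hδ : 0 < δ) (hη0 : 0 ≤ η) (hη : η ≤ δ/2)
    (w0 z : EuclideanSpace ℝ (Fin S))
    (hw0 : ∀ s, 0 ≤ w0 s) (hz0 : ∀ s, 0 ≤ z s)
    (hw0sum : ∑ s, q s * w0 s = 1) (hzsum : ∑ s, q s * z s = 1)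
    (hGw : ∑ s, q s * f (w0 s) ≤ δ + η) (hGz : ∑ s, q s * f (z s) ≤ δ/2) :
    ∃ w' : EuclideanSpace ℝ (Fin S),
      (∑ s, q s * f (w' s) ≤ δ) ∧ (∑ s, q s * w' s = 1) ∧ (∀ s, 0 ≤ w' s) ∧
      ‖w' - w0‖ ≤ (2*η/δ) * ‖z - w0‖ := by
  set g := ∑ s, q s * f (w0 s) with hg
  set θ := max (g - δ) 0 * (2/δ) with hθ
  have hθ0 : 0 ≤ θ := mul_nonneg (le_max_right _ _) (by positivity)
  have hgδ : g - δ ≤ η := by linarith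
  have hmax : max (g - δ) 0 ≤ η := max_le hgδ hη0
  have hθ1 : θ ≤ 1 := by
    rw [hθ]
    calc max (g - δ) 0 * (2/δ) ≤ (δ/2) * (2/δ) := by
          apply mul_le_mul_of_nonneg_right (le_trans hmax hη) (by positivity)
      _ = 1 := by field_simp
  let w' : EuclideanSpace ℝ (Fin S) := WithLp.toLp 2 (fun s => (1-θ) * w0 s + θ * z s)
  have hw'app : ∀ s, w' s = (1-θ) * w0 s + θ * z s := fun s => rfl
  refine ⟨w', ?_, ?_, ?_, ?_⟩
  simp only [hw'app]
  · -- f-constraint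
    have hpt : ∀ s, f ((1-θ) * w0 s + θ * z s) ≤ (1-θ) * f (w0 s) + θ * f (z s) := by
      intro s
      have := hconv.2 (Set.mem_univ (w0 s)) (Set.mem_univ (z s))
        (by linarith : (0:ℝ) ≤ 1 - θ) hθ0 (by ring)
      simpa using this
    have hsum : ∑ s, q s * f ((1-θ) * w0 s + θ * z s)
        ≤ (1-θ) * g + θ * (∑ s, q s * f (z s)) := by
      calc ∑ s, q s * f ((1-θ) * w0 s + θ * z s)
          ≤ ∑ s, q s * ((1-θ) * f (w0 s) + θ * f (z s)) :=
            Finset.sum_le_sum fun s _ => mul_le_mul_of_nonneg_left (hpt s) (hq s)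
        _ = (1-θ) * g + θ * (∑ s, q s * f (z s)) := by
            rw [hg, Finset.mul_sum, Finset.mul_sum, ← Finset.sum_add_distrib]
            exact Finset.sum_congr rfl fun s _ => by ring
    refine le_trans hsum ?_
    rcases le_or_gt g δ with hgle | hggt
    · have : θ = 0 := by rw [hθ, max_eq_right (by linarith), zero_mul]
      rw [this]; simpa using hgle
    · have hθeq : θ = (g - δ) * (2/δ) := by rw [hθ, max_eq_left (by linarith)]
      have hz2 : θ * (∑ s, q s * f (z s)) ≤ θ * (δ/2) :=
        mul_le_mul_of_nonneg_left hGz hθ0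
      have h1 : (1-θ) * g + θ * (δ/2) = δ - 2*(g-δ)^2/δ := by
        rw [hθeq]; field_simp; ring
      have h2 : 0 ≤ 2*(g-δ)^2/δ := by positivity
      linarith
  · -- sum = 1
    simp only [hw'app]
    calc ∑ s, q s * ((1-θ) * w0 s + θ * z s)
        = (1-θ) * (∑ s, q s * w0 s) + θ * (∑ s, q s * z s) := by
          rw [Finset.mul_sum, Finset.mul_sum, ← Finset.sum_add_distrib]
          exact Finset.sum_congr rfl fun s _ => by ring
      _ = 1 := by rw [hw0sum, hzsum]; ring
  · intro s
    rw [hw'app]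
    have := hw0 s; have := hz0 s
    have h1θ : (0:ℝ) ≤ 1 - θ := by linarith
    positivity
  · -- norm bound
    have heq : w' - w0 = θ • (z - w0) := by
      ext s
      show (1-θ) * w0 s + θ * z s - w0 s = θ * (z s - w0 s)
      ring
    rw [heq, norm_smul, Real.norm_eq_abs, abs_of_nonneg hθ0]
    apply mul_le_mul_of_nonneg_right _ (norm_nonneg _)
    rw [hθ]
    calc max (g - δ) 0 * (2/δ) ≤ η * (2/δ) :=
          mul_le_mul_of_nonneg_right hmax (by positivity)
      _ = 2*η/δ := by ring

set_option maxHeartbeats 1000000 in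
lemma helper_approx {S : ℕ} (p : EuclideanSpace ℝ (Fin S)) (hp1 : ∑ s, p s = 1)
    {M : ℝ} (hM1 : 1 ≤ M)
    {f : ℝ → ℝ} (hconv : ConvexOn ℝ Set.univ f) (hf1 : f 1 = 0)
    {L : ℝ} (hL1 : 1 ≤ L)
    (hL : ∀ x ∈ Set.Icc (0:ℝ) (2*M), ∀ y ∈ Set.Icc (0:ℝ) (2*M), |f x - f y| ≤ L * |x - y|)
    {δ : ℝ} (hδ : 0 < δ)
    (v v' : EuclideanSpace ℝ (Fin S)) (hv' : ∀ s, 0 ≤ p s + v' s)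
    {ρ : ℝ} (hd : ‖v' - v‖ ≤ ρ) (hv'n : ‖v'‖ ≤ ρ)
    (hsmall1 : M * Real.sqrt S * ρ ≤ 1/2)
    (hsmall2 : 4 * L * M^2 * Real.sqrt S * ρ ≤ δ/2)
    (hsmall3 : 3 * L * Real.sqrt S * ρ ≤ δ/2)
    (w : EuclideanSpace ℝ (Fin S)) (hw : w ∈ Phi S p f δ v)
    (hwbox : ∀ s, w s ∈ Set.Icc (0:ℝ) M) :
    ∃ w' ∈ Phi S p f δ v', ‖w' - w‖ ≤ (2*M^2*S + 16*L*M^3*S/δ) * ρ := by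
  obtain ⟨hwf, hwsum, hwpos⟩ := hw
  set sq := Real.sqrt S with hsqdef
  have hsq0 : 0 ≤ sq := Real.sqrt_nonneg _
  have hρ0 : 0 ≤ ρ := le_trans (norm_nonneg _) hv'n
  have hM0 : (0:ℝ) < M := lt_of_lt_of_le one_pos hM1
  have hL0 : (0:ℝ) < L := lt_of_lt_of_le one_pos hL1
  -- perturbation of the equality constraint
  set e := ∑ s, (v' s - v s) * w s with hedef
  have he : |e| ≤ M * sq * ρ := by
    have h1 : |e| ≤ sq * ‖v' - v‖ * M := by
      refine helper_abs_sum_mul_le (v' - v) (fun s => w s) hM0.le (fun s => ?_)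
      rw [abs_of_nonneg (hwbox s).1]; exact (hwbox s).2
    calc |e| ≤ sq * ‖v' - v‖ * M := h1
      _ ≤ sq * ρ * M := by
          apply mul_le_mul_of_nonneg_right _ hM0.le
          exact mul_le_mul_of_nonneg_left hd hsq0
      _ = M * sq * ρ := by ring
  have he2 : |e| ≤ 1/2 := le_trans he hsmall1
  set a := 1 + e with hadef
  have hea := abs_le.1 he2
  have ha1 : 1/2 ≤ a := by rw [hadef]; linarith [hea.1]
  have ha2 : a ≤ 3/2 := by rw [hadef]; linarith [hea.2]
  have ha0 : 0 < a := by linarith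
  have hasum : ∑ s, (p s + v' s) * w s = a := by
    rw [hadef, hedef, ← hwsum, ← Finset.sum_add_distrib]
    exact Finset.sum_congr rfl fun s _ => by ring
  -- total mass of the target weights
  set T := ∑ s, (p s + v' s) with hTdef
  have hTsum : T = 1 + ∑ s, v' s := by rw [hTdef, Finset.sum_add_distrib, hp1]
  have hv'sum : |∑ s, v' s| ≤ sq * ρ := by
    have h1 : |∑ s, v' s| ≤ ∑ s, |v' s| := Finset.abs_sum_le_sum_abs _ _
    have h2 : ∑ s, |v' s| ≤ sq * ‖v'‖ := helper_sum_abs_le v'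
    have h3 : sq * ‖v'‖ ≤ sq * ρ := mul_le_mul_of_nonneg_left hv'n hsq0
    linarith
  have hsqρ : sq * ρ ≤ 1/2 := by
    have h := mul_nonneg (mul_nonneg hsq0 hρ0) (sub_nonneg.2 hM1)
    nlinarith
  have hva := abs_le.1 hv'sum
  have hT1 : 1/2 ≤ T := by rw [hTsum]; linarith [hva.1]
  have hT2 : T ≤ 3/2 := by rw [hTsum]; linarith [hva.2]
  have hT0 : 0 < T := by linarith
  have hTd : |T - 1| ≤ sq * ρ := by
    have : T - 1 = ∑ s, v' s := by rw [hTsum]; ring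
    rw [this]; exact hv'sum
  -- the scaled point and the slack point
  set w0 : EuclideanSpace ℝ (Fin S) := WithLp.toLp 2 (fun s => w s / a) with hw0def
  set z : EuclideanSpace ℝ (Fin S) := WithLp.toLp 2 (fun _ => 1 / T) with hzdef
  have hw0app : ∀ s, w0 s = w s / a := fun _ => rfl
  have hzapp : ∀ s : Fin S, z s = 1 / T := fun _ => rfl
  have hw0pos : ∀ s, 0 ≤ w0 s := fun s => div_nonneg (hwbox s).1 ha0.le
  have hzpos : ∀ s, 0 ≤ z s := fun s => by rw [hzapp s]; positivity
  have hw0sum : ∑ s, (p s + v' s) * w0 s = 1 := by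
    have h1 : ∑ s, (p s + v' s) * w0 s = (∑ s, (p s + v' s) * w s) / a := by
      rw [Finset.sum_div]
      exact Finset.sum_congr rfl fun s _ => by rw [hw0app]; ring
    rw [h1, hasum, div_self ha0.ne']
  have hzsum : ∑ s, (p s + v' s) * z s = 1 := by
    have h1 : ∑ s, (p s + v' s) * z s = (∑ s, (p s + v' s)) * (1/T) := by
      rw [Finset.sum_mul]
    rw [h1, ← hTdef]
    field_simp
  -- coordinates in [0, 2M]
  have hw0box : ∀ s, w0 s ∈ Set.Icc (0:ℝ) (2*M) := by
    intro s
    refine ⟨hw0pos s, ?_⟩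
    rw [hw0app, div_le_iff₀ ha0]
    have h1 : (0:ℝ) ≤ 2*a - 1 := by linarith
    nlinarith [(hwbox s).2, mul_nonneg hM0.le h1]
  have hzmem : (1/T : ℝ) ∈ Set.Icc (0:ℝ) (2*M) := by
    refine ⟨by positivity, ?_⟩
    rw [div_le_iff₀ hT0]
    nlinarith [mul_nonneg (sub_nonneg.2 hM1) (by linarith : (0:ℝ) ≤ 2*T - 1)]
  have h1mem : (1:ℝ) ∈ Set.Icc (0:ℝ) (2*M) := ⟨zero_le_one, by linarith⟩
  have hwmem : ∀ s, w s ∈ Set.Icc (0:ℝ) (2*M) :=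
    fun s => ⟨(hwbox s).1, by linarith [(hwbox s).2]⟩
  -- |f| bound on [0,M]
  have hfw : ∀ s, |f (w s)| ≤ L * M := by
    intro s
    have h1 := hL (w s) (hwmem s) 1 h1mem
    rw [hf1, sub_zero] at h1
    refine le_trans h1 ?_
    apply mul_le_mul_of_nonneg_left _ hL0.le
    rw [abs_le]
    constructor
    · linarith [(hwbox s).1, (hwbox s).2, hM1]
    · linarith [(hwbox s).1, (hwbox s).2, hM1]
  -- bound on G(z)
  have hGz : ∑ s, (p s + v' s) * f (z s) ≤ δ/2 := by
    have hfz : |f (1/T)| ≤ L * (2*(sq*ρ)) := by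
      have h1 := hL (1/T) hzmem 1 h1mem
      rw [hf1, sub_zero] at h1
      refine le_trans h1 (mul_le_mul_of_nonneg_left ?_ hL0.le)
      have h2 : 1/T - 1 = -(T-1)/T := by field_simp; ring
      rw [h2, abs_div, abs_neg, abs_of_pos hT0, div_le_iff₀ hT0]
      nlinarith [hTd, mul_nonneg (mul_nonneg hsq0 hρ0) (by linarith : (0:ℝ) ≤ 2*T - 1)]
    have hsumz : ∑ s, (p s + v' s) * f (z s) = T * f (1/T) := by
      rw [hTdef, Finset.sum_mul]
    rw [hsumz]
    have h3 : T * f (1/T) ≤ T * |f (1/T)| :=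
      mul_le_mul_of_nonneg_left (le_abs_self _) hT0.le
    have h4 : T * |f (1/T)| ≤ (3/2) * (L * (2*(sq*ρ))) :=
      mul_le_mul hT2 hfz (abs_nonneg _) (by norm_num)
    have h5 : (3/2) * (L * (2*(sq*ρ))) = 3*L*sq*ρ := by ring
    have h6 : 3*L*sq*ρ ≤ δ/2 := hsmall3
    linarith
  -- per-coordinate distance between w0 and w
  have hdiffc : ∀ s, |w0 s - w s| ≤ 2*M^2*sq*ρ := by
    intro s
    have h1 : w0 s - w s = -(w s * e) / a := by
      rw [hw0app, eq_div_iff ha0.ne', sub_mul, div_mul_cancel₀ _ ha0.ne', hadef]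
      ring
    rw [h1, abs_div, abs_neg, abs_mul, abs_of_pos ha0, div_le_iff₀ ha0,
      abs_of_nonneg (hwbox s).1]
    have h2 : w s * |e| ≤ M * |e| := mul_le_mul_of_nonneg_right (hwbox s).2 (abs_nonneg e)
    have h3 : M * |e| ≤ M * (M*sq*ρ) := mul_le_mul_of_nonneg_left he hM0.le
    have h4 : 2*M^2*sq*ρ * (1/2) ≤ 2*M^2*sq*ρ * a :=
      mul_le_mul_of_nonneg_left ha1 (by positivity)
    nlinarith [h2, h3, h4]
  -- bound on G(w0)
  have hGw : ∑ s, (p s + v' s) * f (w0 s) ≤ δ + 4*L*M^2*sq*ρ := by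
    have hsplit : ∑ s, (p s + v' s) * f (w s) ≤ δ + sq*ρ*(L*M) := by
      have h1 : ∑ s, (p s + v' s) * f (w s)
          = ∑ s, (p s + v s) * f (w s) + ∑ s, (v' s - v s) * f (w s) := by
        rw [← Finset.sum_add_distrib]
        exact Finset.sum_congr rfl fun s _ => by ring
      have h2 : |∑ s, (v' s - v s) * f (w s)| ≤ sq * ‖v' - v‖ * (L*M) :=
        helper_abs_sum_mul_le (v' - v) _ (by positivity) hfw
      have h3 : sq * ‖v' - v‖ * (L*M) ≤ sq * ρ * (L*M) :=
        mul_le_mul_of_nonneg_right (mul_le_mul_of_nonneg_left hd hsq0) (by positivity)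
      have h5 : ∑ s, (v' s - v s) * f (w s) ≤ sq*ρ*(L*M) :=
        le_trans (le_trans (le_abs_self _) h2) h3
      rw [h1]; linarith
    have hfdiff : ∀ s, f (w0 s) ≤ f (w s) + L * (2*M^2*sq*ρ) := by
      intro s
      have h1 := hL (w0 s) (hw0box s) (w s) (hwmem s)
      have h3 : L * |w0 s - w s| ≤ L * (2*M^2*sq*ρ) :=
        mul_le_mul_of_nonneg_left (hdiffc s) hL0.le
      have h4 : f (w0 s) - f (w s) ≤ L * (2*M^2*sq*ρ) :=
        le_trans (le_abs_self _) (le_trans h1 h3)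
      linarith
    have hterm : ∀ s, (p s + v' s) * f (w0 s)
        ≤ (p s + v' s) * f (w s) + (p s + v' s) * (L*(2*M^2*sq*ρ)) := by
      intro s
      have h1 := mul_le_mul_of_nonneg_left (hfdiff s) (hv' s)
      rw [mul_add] at h1
      exact h1
    calc ∑ s, (p s + v' s) * f (w0 s)
        ≤ ∑ s, ((p s + v' s) * f (w s) + (p s + v' s) * (L*(2*M^2*sq*ρ))) :=
          Finset.sum_le_sum fun s _ => hterm s
      _ = (∑ s, (p s + v' s) * f (w s)) + T * (L*(2*M^2*sq*ρ)) := by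
          rw [Finset.sum_add_distrib, ← Finset.sum_mul, hTdef]
      _ ≤ (δ + sq*ρ*(L*M)) + (3/2) * (L*(2*M^2*sq*ρ)) := by
          have h6 : T * (L*(2*M^2*sq*ρ)) ≤ (3/2) * (L*(2*M^2*sq*ρ)) :=
            mul_le_mul_of_nonneg_right hT2 (by positivity)
          linarith
      _ ≤ δ + 4*L*M^2*sq*ρ := by
          nlinarith [mul_nonneg (mul_nonneg (mul_nonneg hL0.le hM0.le)
            (mul_nonneg hsq0 hρ0)) (sub_nonneg.2 hM1)]
  -- apply the core lemma
  obtain ⟨w', hw'f, hw'sum, hw'pos, hw'norm⟩ :=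
    helper_core (fun s => p s + v' s) hv' hconv hδ
      (by positivity) hsmall2 w0 z hw0pos hzpos hw0sum hzsum hGw hGz
  refine ⟨w', ⟨hw'f, hw'sum, hw'pos⟩, ?_⟩
  have htri : ‖w' - w‖ ≤ ‖w' - w0‖ + ‖w0 - w‖ := by
    have h1 : w' - w = (w' - w0) + (w0 - w) := by abel
    rw [h1]; exact norm_add_le _ _
  have h2 : ‖z - w0‖ ≤ sq * (2*M) := by
    refine helper_norm_le (z - w0) (m := 2*M) (by linarith) fun s => ?_
    have ha := hw0box s
    have hb := hzmem
    have hz1 : z s = 1/T := hzapp s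
    show |z s - w0 s| ≤ 2*M
    rw [hz1, abs_le]
    constructor
    · linarith [hb.1, hb.2, ha.1, ha.2]
    · linarith [hb.1, hb.2, ha.1, ha.2]
  have h3 : ‖w0 - w‖ ≤ sq * (2*M^2*sq*ρ) := by
    refine helper_norm_le (w0 - w) (m := 2*M^2*sq*ρ) (by positivity) fun s => ?_
    exact hdiffc s
  have h4 : ‖w' - w0‖ ≤ (2*(4*L*M^2*sq*ρ)/δ) * (sq*(2*M)) :=
    le_trans hw'norm (mul_le_mul_of_nonneg_left h2 (by positivity))
  have hS2 : sq * sq = (S:ℝ) := Real.mul_self_sqrt (Nat.cast_nonneg S)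
  have hkey : (2*(4*L*M^2*sq*ρ)/δ) * (sq*(2*M)) + sq * (2*M^2*sq*ρ)
      = (2*M^2*S + 16*L*M^3*S/δ) * ρ := by
    rw [← hS2]; field_simp; ring
  linarith

set_option maxHeartbeats 1000000

/-- Lemma 6 of the paper: the perturbed feasible set `Φ(u)` converges to `Φ(0)` in
Hausdorff distance at rate `O(‖u‖₂)`. -/
theorem stmt13 (S : ℕ) (hS : 1 ≤ S) (p : EuclideanSpace ℝ (Fin S)) (hp : ∀ s, 0 < p s)
    (hp1 : ∑ s, p s = 1) (M : ℝ) (hM : 0 < M)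
    (f : ℝ → ℝ) (hconv : ConvexOn ℝ Set.univ f) (hf1 : f 1 = 0)
    (hdiff : Differentiable ℝ f) (hdiff2 : Differentiable ℝ (deriv f))
    (c : ℝ) (hc : 0 < c) (hf'' : ∀ t ∈ Set.Icc (0 : ℝ) M, c ≤ deriv (deriv f) t)
    (δ : ℝ) (hδ : 0 < δ) (ε : ℝ) (hε : 0 < ε)
    (hεδ : ε ≤ δ / (5 * Real.sqrt S * |deriv f 1|))
    (hΦsub : ∀ u : EuclideanSpace ℝ (Fin S), ‖u‖ ≤ ε → (∀ s, 0 ≤ p s + u s) →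
      Phi S p f δ u ⊆ {w | ∀ s, w s ∈ Set.Icc (0 : ℝ) M})
    (hΦne : ∀ u : EuclideanSpace ℝ (Fin S), ‖u‖ ≤ ε → (∀ s, 0 ≤ p s + u s) →
      (Phi S p f δ u).Nonempty) :
    ∃ C > (0 : ℝ), ∀ u : EuclideanSpace ℝ (Fin S), ‖u‖ ≤ ε → (∀ s, 0 ≤ p s + u s) →
      Metric.hausdorffDist (Phi S p f δ u) (Phi S p f δ 0) ≤ C * ‖u‖ := by
  have hsq1 : (1:ℝ) ≤ Real.sqrt S := by
    rw [show (1:ℝ) = Real.sqrt 1 by simp]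
    exact Real.sqrt_le_sqrt (by exact_mod_cast hS)
  have hsq0 : (0:ℝ) < Real.sqrt S := lt_of_lt_of_le one_pos hsq1
  have hzap : ∀ s, (0 : EuclideanSpace ℝ (Fin S)) s = 0 := fun _ => rfl
  have hzero_norm : ‖(0 : EuclideanSpace ℝ (Fin S))‖ ≤ ε := by simp [hε.le]
  have hzero_pos : ∀ s, 0 ≤ p s + (0 : EuclideanSpace ℝ (Fin S)) s := fun s => by
    rw [hzap s, add_zero]; exact (hp s).le
  have hones : (WithLp.toLp 2 (fun _ => (1:ℝ)) : EuclideanSpace ℝ (Fin S)) ∈ Phi S p f δ 0 := by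
    refine ⟨?_, ?_, fun s => zero_le_one⟩
    · show ∑ s, (p s + (0 : EuclideanSpace ℝ (Fin S)) s) * f 1 ≤ δ
      simp only [hf1, mul_zero, Finset.sum_const_zero]
      exact hδ.le
    · show ∑ s, (p s + (0 : EuclideanSpace ℝ (Fin S)) s) * (1:ℝ) = 1
      simp only [hzap, add_zero, mul_one]
      exact hp1
  have hM1 : (1:ℝ) ≤ M := by
    have hb := hΦsub 0 hzero_norm hzero_pos hones
    exact (hb ⟨0, by omega⟩).2
  have hM0 : (0:ℝ) < M := lt_of_lt_of_le one_pos hM1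
  -- Lipschitz constant on [0, 2M]
  obtain ⟨K, hK⟩ := (isCompact_Icc (a := (0:ℝ)) (b := 2*M)).exists_bound_of_continuousOn
    (hdiff2.continuous.continuousOn)
  have hL1 : (1:ℝ) ≤ max K 1 := le_max_right _ _
  have hL0 : (0:ℝ) < max K 1 := lt_of_lt_of_le one_pos hL1
  have hLip : ∀ x ∈ Set.Icc (0:ℝ) (2*M), ∀ y ∈ Set.Icc (0:ℝ) (2*M),
      |f x - f y| ≤ (max K 1) * |x - y| := by
    intro x hx y hy
    have := Convex.norm_image_sub_le_of_norm_deriv_le (𝕜 := ℝ) (f := f) (C := max K 1)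
      (fun t _ => hdiff t) (fun t ht => le_trans (hK t ht) (le_max_left _ _))
      (convex_Icc _ _) hy hx
    simpa [Real.norm_eq_abs] using this
  set L := max K 1 with hLdef
  -- constants
  have hC10 : (0:ℝ) < 4*L*M^2*Real.sqrt S := by positivity
  have hC20 : (0:ℝ) < 3*L*Real.sqrt S := by positivity
  set r₀ := min (1/(2*M*Real.sqrt S))
    (min (δ/(2*(4*L*M^2*Real.sqrt S))) (δ/(2*(3*L*Real.sqrt S)))) with hr0def
  have hr00 : 0 < r₀ :=
    lt_min (by positivity) (lt_min (by positivity) (by positivity))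
  have hSR : (0:ℝ) < (S:ℝ) := by exact_mod_cast hS
  have hC30 : (0:ℝ) < 2*M^2*S + 16*L*M^3*S/δ := by positivity
  set C₃ := 2*M^2*(S:ℝ) + 16*L*M^3*S/δ with hC3def
  set C := C₃ + M*Real.sqrt S/r₀ + 1 with hCdef
  have hMsr : (0:ℝ) < M*Real.sqrt S/r₀ := div_pos (mul_pos hM0 hsq0) hr00
  have hC0 : 0 < C := by rw [hCdef]; linarith [hC30]
  refine ⟨C, hC0, ?_⟩
  intro u hu hpu
  have hun0 : 0 ≤ ‖u‖ := norm_nonneg u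
  rcases le_or_gt ‖u‖ r₀ with hcase | hcase
  · -- small perturbation: use the constructive approximation
    have hs1 : M * Real.sqrt S * ‖u‖ ≤ 1/2 := by
      have h1 : ‖u‖ ≤ 1/(2*M*Real.sqrt S) := le_trans hcase (min_le_left _ _)
      rw [le_div_iff₀ (by positivity)] at h1
      nlinarith [hsq0, hM0]
    have hs2 : 4*L*M^2*Real.sqrt S*‖u‖ ≤ δ/2 := by
      have h1 : ‖u‖ ≤ δ/(2*(4*L*M^2*Real.sqrt S)) :=
        le_trans hcase (le_trans (min_le_right _ _) (min_le_left _ _))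
      rw [le_div_iff₀ (by positivity)] at h1
      nlinarith
    have hs3 : 3*L*Real.sqrt S*‖u‖ ≤ δ/2 := by
      have h1 : ‖u‖ ≤ δ/(2*(3*L*Real.sqrt S)) :=
        le_trans hcase (le_trans (min_le_right _ _) (min_le_right _ _))
      rw [le_div_iff₀ (by positivity)] at h1
      nlinarith
    have hC3C : C₃ * ‖u‖ ≤ C * ‖u‖ := by
      apply mul_le_mul_of_nonneg_right _ hun0
      rw [hCdef]
      linarith [hMsr]
    apply Metric.hausdorffDist_le_of_mem_dist (mul_nonneg hC0.le hun0)
    · intro x hx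
      obtain ⟨y, hy, hny⟩ := helper_approx p hp1 hM1 hconv hf1 hL1 hLip hδ u 0
        (fun s => by simpa using (hp s).le)
        (le_of_eq (by rw [zero_sub, norm_neg]))
        (by simpa using hun0)
        hs1 hs2 hs3 x hx (hΦsub u hu hpu hx)
      refine ⟨y, hy, ?_⟩
      rw [dist_eq_norm, norm_sub_rev]
      exact le_trans hny hC3C
    · intro y hy
      obtain ⟨x, hx, hnx⟩ := helper_approx p hp1 hM1 hconv hf1 hL1 hLip hδ 0 u hpu
        (le_of_eq (by rw [sub_zero]))
        le_rfl
        hs1 hs2 hs3 y hy (hΦsub 0 hzero_norm hzero_pos hy)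
      refine ⟨x, hx, ?_⟩
      rw [dist_eq_norm, norm_sub_rev]
      exact le_trans hnx hC3C
  · -- large perturbation: use the diameter bound
    have hd1 : Metric.hausdorffDist (Phi S p f δ u) (Phi S p f δ 0) ≤ Real.sqrt S * M := by
      apply Metric.hausdorffDist_le_of_mem_dist (mul_nonneg (Real.sqrt_nonneg _) hM0.le)
      · intro x hx
        obtain ⟨y, hy⟩ := hΦne 0 hzero_norm hzero_pos
        refine ⟨y, hy, ?_⟩
        rw [dist_eq_norm]
        refine helper_norm_le _ hM0.le fun s => ?_
        have h1 := hΦsub u hu hpu hx s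
        have h2 := hΦsub 0 hzero_norm hzero_pos hy s
        show |x s - y s| ≤ M
        rw [abs_le]
        constructor
        · linarith [h1.1, h1.2, h2.1, h2.2]
        · linarith [h1.1, h1.2, h2.1, h2.2]
      · intro y hy
        obtain ⟨x, hx⟩ := hΦne u hu hpu
        refine ⟨x, hx, ?_⟩
        rw [dist_eq_norm]
        refine helper_norm_le _ hM0.le fun s => ?_
        have h1 := hΦsub u hu hpu hx s
        have h2 := hΦsub 0 hzero_norm hzero_pos hy s
        show |y s - x s| ≤ M
        rw [abs_le]
        constructor
        · linarith [h1.1, h1.2, h2.1, h2.2]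
        · linarith [h1.1, h1.2, h2.1, h2.2]
    refine le_trans hd1 ?_
    have h1 : Real.sqrt S * M = (M*Real.sqrt S/r₀) * r₀ := by
      rw [div_mul_cancel₀ _ hr00.ne']
      ring
    have h2 : (M*Real.sqrt S/r₀) * r₀ ≤ (M*Real.sqrt S/r₀) * ‖u‖ :=
      mul_le_mul_of_nonneg_left hcase.le (by positivity)
    have h3 : (M*Real.sqrt S/r₀) * ‖u‖ ≤ C * ‖u‖ := by
      apply mul_le_mul_of_nonneg_right _ hun0
      rw [hCdef]
      linarith [hC30]
    exact h1.trans_le (h2.trans h3)
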